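/- Let X be a compact metric space and G a semigroup of self-maps with the property (Montel-type) that any open set on which G omits at least q distinct points of X is contained in the Fatou set F(G). Then the Julia set J(G) is the smallest closed backward invariant set containing at least q points, i.e., if E ⊆ X is closed, backward invariant under every g ∈ G, and has at least q points, then J(G) ⊆ E. -/
import Mathlib

def FatouSet {X : Type*} [MetricSpace X] (G : Set (X → X)) : Set X :=
  {x | ∃ U : Set X, IsOpen U ∧ x ∈ U ∧ EquicontinuousOn (fun g : G => (g : X → X)) U}

def JuliaSet {X : Type*} [MetricSpace X] (G : Set (X → X)) : Set X :=
  (FatouSet G)ᶜ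

theorem stmt4 {X : Type*} [MetricSpace X] [CompactSpace X] (G : Set (X → X)) (q : ℕ)
    -- Montel-type property: an open set on which all maps of `G` omit at least
    -- `q` distinct points lies in the Fatou set.
    (hMontel : ∀ U : Set X, IsOpen U → ∀ P : Finset X, q ≤ P.card →
      (∀ g ∈ G, ∀ z ∈ U, g z ∉ (P : Set X)) → U ⊆ FatouSet G) :
    -- `J(G)` is contained in every closed backward invariant set with at least `q` points.
    ∀ E : Set X, IsClosed E → (∀ g ∈ G, g ⁻¹' E ⊆ E) →
      (∃ P : Finset X, (P : Set X) ⊆ E ∧ q ≤ P.card) →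
      JuliaSet G ⊆ E := by
  rintro E hE hinv ⟨P, hPE, hPq⟩
  have hU : Eᶜ ⊆ FatouSet G := by
    apply hMontel Eᶜ hE.isOpen_compl P hPq
    intro g hg z hz hgz
    exact hz (hinv g hg (hPE hgz))
  intro x hx
  by_contra hxE
  exact hx (hU hxE)
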